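/- arXiv:1305.0134 — 4 statements merged into one kernel-verified Lean document; each statement's English description precedes it below -/
import Mathlib

section
/- Let P be a finite partially ordered set and f : P → P an order-preserving map that is monotone, i.e. either p ≤ f(p) for all p ∈ P, or f(p) ≤ p for all p ∈ P. Then |P| is homotopy equivalent to |fix(f)|, where fix(f) = {p ∈ P : f(p) = p} carries the order induced from P. -/
open Classical

/-- The geometric realization of (the order complex of) a finite poset `P`:
points are convex combinations of elements of `P` whose support is a chain,
topologized as a subspace of `P → ℝ`. -/
abbrev GeomReal (P : Type*) [Fintype P] [PartialOrder P] : Type _ :=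
  { f : P → ℝ // (∀ p, 0 ≤ f p) ∧ (∑ p, f p = 1) ∧ IsChain (· ≤ ·) {p | f p ≠ 0} }

namespace GRAux

variable {P Q R : Type} [Fintype P] [PartialOrder P] [Fintype Q] [PartialOrder Q]
  [Fintype R] [PartialOrder R]

noncomputable def push (a : P → Q) (x : P → ℝ) : Q → ℝ :=
  fun q => ∑ p, if a p = q then x p else 0

lemma push_nonneg {a : P → Q} {x : P → ℝ} (hx : ∀ p, 0 ≤ x p) (q : Q) :
    0 ≤ push a x q :=
  Finset.sum_nonneg fun p _ => by split_ifs; exacts [hx p, le_rfl]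

lemma push_sum (a : P → Q) (x : P → ℝ) : ∑ q, push a x q = ∑ p, x p := by
  unfold push
  rw [Finset.sum_comm]
  simp [Finset.sum_ite_eq]

lemma push_support {a : P → Q} {x : P → ℝ} {q : Q} (h : push a x q ≠ 0) :
    ∃ p, a p = q ∧ x p ≠ 0 := by
  by_contra hc
  push_neg at hc
  exact h (Finset.sum_eq_zero fun p _ => by
    split_ifs with hpq
    · exact hc p hpq
    · rfl)

lemma push_chain {a : P → Q} (ha : Monotone a) {x : P → ℝ}
    (hc : IsChain (· ≤ ·) {p | x p ≠ 0}) :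
    IsChain (· ≤ ·) {q | push a x q ≠ 0} := by
  intro q hq q' hq' hne
  obtain ⟨p, hpq, hp⟩ := push_support hq
  obtain ⟨p', hpq', hp'⟩ := push_support hq'
  rcases eq_or_ne p p' with rfl | hpp
  · exact absurd (hpq.symm.trans hpq') hne
  · rcases hc hp hp' hpp with h | h
    · exact Or.inl (hpq ▸ hpq' ▸ ha h)
    · exact Or.inr (hpq' ▸ hpq ▸ ha h)

lemma push_comp (a : P → Q) (b : Q → R) (x : P → ℝ) :
    push b (push a x) = push (b ∘ a) x := by
  funext r
  unfold push
  rw [Finset.sum_congr rfl (g := fun q => ∑ p, if a p = q then (if b q = r then x p else 0) else 0)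
    (fun q _ => by split_ifs with h <;> simp [h])]
  rw [Finset.sum_comm]
  refine Finset.sum_congr rfl fun p _ => ?_
  simp [Finset.sum_ite_eq]

lemma push_id (x : P → ℝ) : push id x = x := by
  funext q
  simp [push, Finset.sum_ite_eq']


variable {P Q : Type} [Fintype P] [PartialOrder P] [Fintype Q] [PartialOrder Q]

noncomputable def cum (x : P → ℝ) (p : P) : ℝ :=
  ∑ p' ∈ Finset.univ.filter (· ≤ p), x p'

lemma cum_nonneg {x : P → ℝ} (h0 : ∀ p, 0 ≤ x p) (p : P) : 0 ≤ cum x p :=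
  Finset.sum_nonneg fun p' _ => h0 p'

lemma cum_le_one {x : P → ℝ} (h0 : ∀ p, 0 ≤ x p) (hs : ∑ p, x p = 1) (p : P) :
    cum x p ≤ 1 := by
  rw [← hs]
  exact Finset.sum_le_sum_of_subset_of_nonneg (Finset.subset_univ _)
    (fun p' _ _ => h0 p')

lemma le_cum {x : P → ℝ} (h0 : ∀ p, 0 ≤ x p) (p : P) : x p ≤ cum x p :=
  Finset.single_le_sum (fun p' _ => h0 p')
    (Finset.mem_filter.mpr ⟨Finset.mem_univ _, le_refl p⟩)

lemma cum_le_of_lt {x : P → ℝ} (h0 : ∀ p, 0 ≤ x p) {p p' : P} (h : p' < p) :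
    cum x p' ≤ cum x p - x p := by
  have hmem : p ∈ Finset.univ.filter (· ≤ p) :=
    Finset.mem_filter.mpr ⟨Finset.mem_univ _, le_refl p⟩
  have hsplit : x p + ∑ p'' ∈ (Finset.univ.filter (· ≤ p)).erase p, x p''
      = cum x p := Finset.add_sum_erase _ _ hmem
  have hsub : cum x p' ≤ ∑ p'' ∈ (Finset.univ.filter (· ≤ p)).erase p, x p'' := by
    refine Finset.sum_le_sum_of_subset_of_nonneg ?_ (fun p'' _ _ => h0 p'')
    intro p'' hp''
    rw [Finset.mem_filter] at hp''
    refine Finset.mem_erase.mpr ⟨?_, Finset.mem_filter.mpr ⟨Finset.mem_univ _, hp''.2.trans h.le⟩⟩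
    exact ne_of_lt (lt_of_le_of_lt hp''.2 h)
  linarith

/-- The prism homotopy between the pushforwards along `a` and `b`, at "cut level" `s`. -/
noncomputable def hfun (a b : P → Q) (x : P → ℝ) (s : ℝ) : Q → ℝ := fun q =>
  ∑ p, ((if a p = q then min (cum x p) s - min (cum x p - x p) s else 0)
      + (if b p = q then max (cum x p) s - max (cum x p - x p) s else 0))

lemma hfun_nonneg {a b : P → Q} {x : P → ℝ} (h0 : ∀ p, 0 ≤ x p) (s : ℝ) (q : Q) :
    0 ≤ hfun a b x s q := by
  refine Finset.sum_nonneg fun p _ => add_nonneg ?_ ?_ <;> split_ifs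
  · have := min_le_min (show cum x p - x p ≤ cum x p by linarith [h0 p]) (le_refl s)
    linarith
  · linarith
  · have := max_le_max (show cum x p - x p ≤ cum x p by linarith [h0 p]) (le_refl s)
    linarith
  · linarith

lemma hfun_sum (a b : P → Q) (x : P → ℝ) (s : ℝ) :
    ∑ q, hfun a b x s q = ∑ p, x p := by
  unfold hfun
  rw [Finset.sum_comm]
  refine Finset.sum_congr rfl fun p _ => ?_
  rw [Finset.sum_add_distrib]
  simp only [Finset.sum_ite_eq, Finset.mem_univ, if_true]
  have h1 := min_add_max (cum x p) s
  have h2 := min_add_max (cum x p - x p) s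
  linarith

lemma hfun_one {a b : P → Q} {x : P → ℝ} (h0 : ∀ p, 0 ≤ x p) (hs : ∑ p, x p = 1) :
    hfun a b x 1 = push a x := by
  funext q
  unfold hfun push
  refine Finset.sum_congr rfl fun p _ => ?_
  have h1 : cum x p ≤ 1 := cum_le_one h0 hs p
  have h2 : cum x p - x p ≤ 1 := by linarith [h0 p]
  rw [min_eq_left h1, min_eq_left h2, max_eq_right h1, max_eq_right h2]
  split_ifs <;> ring

lemma hfun_zero {a b : P → Q} {x : P → ℝ} (h0 : ∀ p, 0 ≤ x p) :
    hfun a b x 0 = push b x := by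
  funext q
  unfold hfun push
  refine Finset.sum_congr rfl fun p _ => ?_
  have h1 : (0:ℝ) ≤ cum x p := cum_nonneg h0 p
  have h2 : (0:ℝ) ≤ cum x p - x p := by linarith [le_cum h0 p]
  rw [min_eq_right h1, min_eq_right h2, max_eq_left h1, max_eq_left h2]
  split_ifs <;> ring

lemma hfun_support {a b : P → Q} {x : P → ℝ} (h0 : ∀ p, 0 ≤ x p) {s : ℝ} {q : Q}
    (h : hfun a b x s q ≠ 0) :
    ∃ p, (a p = q ∧ x p ≠ 0 ∧ cum x p - x p < s)
       ∨ (b p = q ∧ x p ≠ 0 ∧ s < cum x p) := by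
  obtain ⟨p, _, hp⟩ := Finset.exists_ne_zero_of_sum_ne_zero h
  refine ⟨p, ?_⟩
  have : (if a p = q then min (cum x p) s - min (cum x p - x p) s else 0) ≠ 0
       ∨ (if b p = q then max (cum x p) s - max (cum x p - x p) s else 0) ≠ 0 := by
    by_contra hc
    push_neg at hc
    rw [hc.1, hc.2] at hp
    simp at hp
  rcases this with hA | hB
  · left
    split_ifs at hA with hq
    swap
    · exact absurd rfl hA
    refine ⟨hq, ?_, ?_⟩
    · intro hxz
      rw [hxz, sub_zero] at hA
      exact hA (sub_self _)
    · by_contra hle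
      push_neg at hle
      have h1 : min (cum x p - x p) s = s := min_eq_right hle
      have h2 : min (cum x p) s = s := min_eq_right (by linarith [h0 p])
      rw [h1, h2] at hA
      exact hA (sub_self s)
  · right
    split_ifs at hB with hq
    swap
    · exact absurd rfl hB
    refine ⟨hq, ?_, ?_⟩
    · intro hxz
      rw [hxz, sub_zero] at hB
      exact hB (sub_self _)
    · by_contra hle
      push_neg at hle
      have h1 : max (cum x p) s = s := max_eq_right hle
      have h2 : max (cum x p - x p) s = s := max_eq_right (by linarith [h0 p])
      rw [h1, h2] at hB
      exact hB (sub_self s)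

lemma hfun_chain {a b : P → Q} (ha : Monotone a) (hb : Monotone b) (hab : ∀ p, a p ≤ b p)
    {x : P → ℝ} (h0 : ∀ p, 0 ≤ x p) (hc : IsChain (· ≤ ·) {p | x p ≠ 0}) (s : ℝ) :
    IsChain (· ≤ ·) {q | hfun a b x s q ≠ 0} := by
  have mixed : ∀ p p', x p ≠ 0 → x p' ≠ 0 → cum x p - x p < s → s < cum x p' →
      a p ≤ b p' := by
    intro p p' hp hp' hA hB
    rcases eq_or_ne p p' with rfl | hne
    · exact hab p
    rcases hc hp hp' hne with h | h
    · exact (ha h).trans (hab p')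
    · exact absurd (cum_le_of_lt h0 (lt_of_le_of_ne h (Ne.symm hne))) (by linarith)
  intro q hq q' hq' hne
  obtain ⟨p, hp⟩ := hfun_support h0 hq
  obtain ⟨p', hp'⟩ := hfun_support h0 hq'
  rcases hp with ⟨rfl, hxp, hA⟩ | ⟨rfl, hxp, hB⟩ <;>
    rcases hp' with ⟨rfl, hxp', hA'⟩ | ⟨rfl, hxp', hB'⟩
  · rcases eq_or_ne p p' with rfl | hpp
    · exact absurd rfl hne
    rcases hc hxp hxp' hpp with h | h
    exacts [Or.inl (ha h), Or.inr (ha h)]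
  · exact Or.inl (mixed p p' hxp hxp' hA hB')
  · exact Or.inr (mixed p' p hxp' hxp hA' hB)
  · rcases eq_or_ne p p' with rfl | hpp
    · exact absurd rfl hne
    rcases hc hxp hxp' hpp with h | h
    exacts [Or.inl (hb h), Or.inr (hb h)]

noncomputable def pushMap {a : P → Q} (ha : Monotone a) : C(GeomReal P, GeomReal Q) where
  toFun x := ⟨push a x.1, push_nonneg x.2.1,
    by rw [push_sum]; exact x.2.2.1, push_chain ha x.2.2.2⟩
  continuous_toFun := by
    refine Continuous.subtype_mk ?_ _
    refine continuous_pi fun q => ?_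
    refine continuous_finset_sum _ fun p _ => ?_
    by_cases h : a p = q
    · simpa only [if_pos h, Function.comp_def] using (continuous_apply p).comp continuous_subtype_val
    · simpa only [if_neg h] using continuous_const (y := (0:ℝ))

lemma pushMap_comp {a : P → Q} {b : Q → R} (ha : Monotone a) (hb : Monotone b) :
    (pushMap hb).comp (pushMap ha) = pushMap (hb.comp ha) :=
  ContinuousMap.ext fun x => Subtype.ext (push_comp a b x.1)

lemma pushMap_id : pushMap (monotone_id (α := P)) = ContinuousMap.id _ :=
  ContinuousMap.ext fun x => Subtype.ext (push_id x.1)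

lemma pushMap_congr {a a' : P → Q} (ha : Monotone a) (ha' : Monotone a')
    (h : a = a') : pushMap ha = pushMap ha' := by subst h; rfl

open unitInterval in
lemma homotopic_pushMap {a b : P → Q} (ha : Monotone a) (hb : Monotone b)
    (hab : ∀ p, a p ≤ b p) : (pushMap ha).Homotopic (pushMap hb) := by
  have hcum : ∀ p : P, Continuous fun tx : I × GeomReal P => cum tx.2.1 p := fun p =>
    continuous_finset_sum _ fun p' _ =>
      (continuous_apply p').comp (continuous_subtype_val.comp continuous_snd)
  have hxp : ∀ p : P, Continuous fun tx : I × GeomReal P => tx.2.1 p := fun p =>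
    (continuous_apply p).comp (continuous_subtype_val.comp continuous_snd)
  have hs : Continuous fun tx : I × GeomReal P => (1 : ℝ) - (tx.1 : ℝ) :=
    continuous_const.sub (continuous_subtype_val.comp continuous_fst)
  refine ⟨⟨⟨fun tx => ⟨hfun a b tx.2.1 (1 - (tx.1 : ℝ)),
      hfun_nonneg tx.2.2.1 _,
      by rw [hfun_sum]; exact tx.2.2.2.1,
      hfun_chain ha hb hab tx.2.2.1 tx.2.2.2.2 _⟩, ?_⟩, ?_, ?_⟩⟩
  · refine Continuous.subtype_mk ?_ _
    refine continuous_pi fun q => ?_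
    refine continuous_finset_sum _ fun p _ => ?_
    refine Continuous.add ?_ ?_
    · by_cases h : a p = q
      · simpa only [if_pos h, Pi.sub_def] using
          (((hcum p).min hs).sub (((hcum p).sub (hxp p)).min hs))
      · simpa only [if_neg h] using continuous_const (y := (0:ℝ))
    · by_cases h : b p = q
      · simpa only [if_pos h, Pi.sub_def] using
          (((hcum p).max hs).sub (((hcum p).sub (hxp p)).max hs))
      · simpa only [if_neg h] using continuous_const (y := (0:ℝ))
  · intro x
    refine Subtype.ext ?_
    show hfun a b x.1 (1 - ((0 : I) : ℝ)) = push a x.1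
    rw [show (1 : ℝ) - ((0 : I) : ℝ) = 1 by norm_num]
    exact hfun_one x.2.1 x.2.2.1
  · intro x
    refine Subtype.ext ?_
    show hfun a b x.1 (1 - ((1 : I) : ℝ)) = push b x.1
    rw [show (1 : ℝ) - ((1 : I) : ℝ) = 0 by norm_num]
    exact hfun_zero x.2.1

lemma exists_iter_fix (f : P → P) (hle : ∀ p, p ≤ f p) :
    ∃ N, ∀ p, f (f^[N] p) = f^[N] p := by
  refine ⟨Fintype.card P, fun p => ?_⟩
  set N := Fintype.card P with hNdef
  set u : ℕ → P := fun i => f^[i] p with hu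
  have hstep : ∀ i, u i ≤ u (i + 1) := by
    intro i
    show f^[i] p ≤ f^[i+1] p
    rw [Function.iterate_succ_apply']
    exact hle _
  have hkey : ∃ k < N, u k = u (k + 1) := by
    by_contra hcon
    push_neg at hcon
    have hstrict : ∀ i < N, u i < u (i + 1) := fun i hi =>
      lt_of_le_of_ne (hstep i) (hcon i hi)
    have h2 : ∀ j, j ≤ N → ∀ i < j, u i < u j := by
      intro j
      induction j with
      | zero => intro _ i hi; exact absurd hi (Nat.not_lt_zero i)
      | succ j ih =>
        intro hj i hi
        rcases Nat.lt_succ_iff_lt_or_eq.mp hi with h | rfl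
        · exact (ih (by omega) i h).trans (hstrict j (by omega))
        · exact hstrict i (by omega)
    have hinj : Function.Injective fun i : Fin (N + 1) => u i.val := by
      intro i j hij
      by_contra hne
      have hne' : i.val ≠ j.val := fun h => hne (Fin.ext h)
      rcases hne'.lt_or_gt with h | h
      · exact absurd hij (ne_of_lt (h2 j.val (by omega) i.val h))
      · exact absurd hij.symm (ne_of_lt (h2 i.val (by omega) j.val h))
    have := Fintype.card_le_of_injective _ hinj
    rw [Fintype.card_fin] at this
    omega
  obtain ⟨k, hkN, hfix⟩ := hkey
  have hconst : ∀ m, u (k + m) = u k := by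
    intro m
    induction m with
    | zero => rfl
    | succ m ih =>
      have h1 : u (k + m + 1) = f (u (k + m)) := Function.iterate_succ_apply' f (k + m) p
      have h2 : u (k + 1) = f (u k) := Function.iterate_succ_apply' f k p
      calc u (k + (m + 1)) = f (u (k + m)) := h1
        _ = f (u k) := by rw [ih]
        _ = u (k + 1) := h2.symm
        _ = u k := hfix.symm
  have e1 : u N = u k := by rw [show N = k + (N - k) by omega]; exact hconst _
  have e2 : u (N + 1) = u k := by rw [show N + 1 = k + (N + 1 - k) by omega]; exact hconst _
  calc f (f^[N] p) = u (N + 1) := (Function.iterate_succ_apply' f N p).symm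
    _ = u N := by rw [e1, e2]

lemma exists_iter_fix' (f : P → P) (hge : ∀ p, f p ≤ p) :
    ∃ N, ∀ p, f (f^[N] p) = f^[N] p :=
  exists_iter_fix (P := Pᵒᵈ) f (fun p => hge p)

lemma le_iterate (f : P → P) (hle : ∀ p, p ≤ f p) (n : ℕ) (p : P) : p ≤ f^[n] p := by
  induction n with
  | zero => exact le_refl p
  | succ n ih =>
    rw [Function.iterate_succ_apply']
    exact ih.trans (hle _)

end GRAux

/-- A monotone (increasing or decreasing) order-preserving self-map of a finite
poset induces a homotopy equivalence between `|P|` and `|fix f|`. -/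
theorem homotopyEquiv_fixedPoints {P : Type} [Fintype P] [PartialOrder P]
    (f : P → P) (hf : Monotone f)
    (hmono : (∀ p, p ≤ f p) ∨ (∀ p, f p ≤ p)) :
    Nonempty (ContinuousMap.HomotopyEquiv (GeomReal P) (GeomReal {p : P // f p = p})) := by
  obtain ⟨N, hN⟩ : ∃ N, ∀ p, f (f^[N] p) = f^[N] p := by
    rcases hmono with h | h
    · exact GRAux.exists_iter_fix f h
    · exact GRAux.exists_iter_fix' f h
  let r : P → {p : P // f p = p} := fun p => ⟨f^[N] p, hN p⟩
  have hr : Monotone r := fun p p' h => Subtype.mk_le_mk.mpr (hf.iterate N h)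
  have hι : Monotone (Subtype.val : {p : P // f p = p} → P) := fun y y' h => h
  refine ⟨⟨GRAux.pushMap hr, GRAux.pushMap hι, ?_, ?_⟩⟩
  · rw [GRAux.pushMap_comp hr hι]
    have hhom : (GRAux.pushMap (hι.comp hr)).Homotopic
        (GRAux.pushMap (monotone_id (α := P))) := by
      rcases hmono with h | h
      · exact (GRAux.homotopic_pushMap (monotone_id (α := P)) (hι.comp hr)
          (fun p => GRAux.le_iterate f h N p)).symm
      · exact GRAux.homotopic_pushMap (hι.comp hr) (monotone_id (α := P))
          (fun p => GRAux.le_iterate (P := Pᵒᵈ) f h N p)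
    rw [GRAux.pushMap_id] at hhom
    exact hhom
  · rw [GRAux.pushMap_comp hι hr]
    have he : (r ∘ Subtype.val : {p : P // f p = p} → {p : P // f p = p}) = id := by
      funext y
      exact Subtype.ext (Function.iterate_fixed y.2 N)
    rw [GRAux.pushMap_congr (hr.comp hι) (monotone_id) he, GRAux.pushMap_id]
end

section
/- Let A, B, C, D be topes on a finite type E. If A ≤_B C and C ≤_B D (that is, S(B,A) ⊆ S(B,C) and S(B,C) ⊆ S(B,D)), then C ≤_A D (that is, S(A,C) ⊆ S(A,D)). -/
/-- The separation set `S(X,Y)` of two sign vectors. -/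
def SepSet {E : Type*} (X Y : E → SignType) : Set E := {e | X e = -(Y e) ∧ X e ≠ 0}

/-- A tope is a sign vector with full support. -/
def IsTope {E : Type*} (X : E → SignType) : Prop := ∀ e, X e ≠ 0

/-- If `A ≤_B C` and `C ≤_B D`, then `C ≤_A D`. -/
theorem tope_le_base_change {E : Type*} [Fintype E] (A B C D : E → SignType)
    (hA : IsTope A) (hB : IsTope B) (hC : IsTope C) (hD : IsTope D)
    (h1 : SepSet B A ⊆ SepSet B C) (h2 : SepSet B C ⊆ SepSet B D) :
    SepSet A C ⊆ SepSet A D := by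
  intro e he
  obtain ⟨h, hne⟩ := he
  by_cases hBA : B e = -(A e)
  · have h1e := h1 ⟨hBA, hB e⟩
    have := h1e.1
    have hAe := hA e; have hCe := hC e
    rw [hBA] at this
    have : A e = C e := by
      cases hA : A e <;> cases hC : C e <;> simp_all
    rw [this] at h
    cases hC : C e <;> simp_all
  · have hEq : B e = A e := by
      have := hA e; have := hB e
      cases hA : A e <;> cases hB : B e <;> simp_all
    have h2e := h2 ⟨by rw [hEq, h], hB e⟩
    have := h2e.1
    rw [hEq] at this
    exact ⟨this, hne⟩
end

section
/- Let T, R, T′, R′, T″, R″ be topes on a finite type E. If (T,R) ≼ (T′,R′) and (T′,R′) ≼ (T″,R″), then (T,R) ≼ (T″,R″); that is, the relation ≼ on ordered pairs of topes is transitive. -/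
/-- A tope on `E`: a sign vector with full support. -/
abbrev Tope (E : Type*) : Type _ := { X : E → SignType // ∀ e, X e ≠ 0 }

instance {E : Type*} : Neg (Tope E) :=
  ⟨fun X => ⟨-X.1, fun e h => X.2 e (by revert h; cases hx : X.1 e <;> simp [hx])⟩⟩

/-- The order relation of the tope-pair poset `Q`:
`(T,R) ≼ (T′,R′)` iff `S(T′,T) ⊆ S(T′,R)` and `S(T′,R) ⊆ S(T′,R′)`. -/
def QLE {E : Type*} (p q : Tope E × Tope E) : Prop :=
  SepSet q.1.1 p.1.1 ⊆ SepSet q.1.1 p.2.1 ∧ SepSet q.1.1 p.2.1 ⊆ SepSet q.1.1 q.2.1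

/-- The relation `≼` on ordered pairs of topes is transitive. -/
theorem qle_trans {E : Type*} [Fintype E] (T R T' R' T'' R'' : Tope E)
    (h1 : QLE (T, R) (T', R')) (h2 : QLE (T', R') (T'', R'')) :
    QLE (T, R) (T'', R'') := by
  obtain ⟨h11, h12⟩ := h1
  obtain ⟨h21, h22⟩ := h2
  have key : ∀ e : E,
      (T''.1 e = -(T.1 e) → T''.1 e = -(R.1 e)) ∧
      (T''.1 e = -(R.1 e) → T''.1 e = -(R''.1 e)) := by
    intro e
    have H1 : T'.1 e = -(T.1 e) → T'.1 e = -(R.1 e) :=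
      fun h => (h11 ⟨h, T'.2 e⟩).1
    have H2 : T'.1 e = -(R.1 e) → T'.1 e = -(R'.1 e) :=
      fun h => (h12 ⟨h, T'.2 e⟩).1
    have H3 : T''.1 e = -(T'.1 e) → T''.1 e = -(R'.1 e) :=
      fun h => (h21 ⟨h, T''.2 e⟩).1
    have H4 : T''.1 e = -(R'.1 e) → T''.1 e = -(R''.1 e) :=
      fun h => (h22 ⟨h, T''.2 e⟩).1
    have ht := T.2 e; have hr := R.2 e; have ht' := T'.2 e
    have hr' := R'.2 e; have ht'' := T''.2 e; have hr'' := R''.2 e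
    revert H1 H2 H3 H4 ht hr ht' hr' ht'' hr''
    generalize T.1 e = a; generalize R.1 e = b; generalize T'.1 e = c
    generalize R'.1 e = d; generalize T''.1 e = f; generalize R''.1 e = g
    clear h11 h12 h21 h22
    intro H1 H2 H3 H4 ht hr ht2 hr2 ht3 hr3
    cases a <;> cases b <;> cases c <;> cases d <;> cases f <;> cases g <;>
      simp_all
  exact ⟨fun e he => ⟨((key e).1 he.1), T''.2 e⟩,
         fun e he => ⟨((key e).2 he.1), T''.2 e⟩⟩
end

section
/- For every nonempty finite ≼-chain σ of ordered pairs of topes on a finite type E, the image ρ(σ) = {ρ(x) : x ∈ σ} is again a nonempty finite ≼-chain, and the induced map σ ↦ ρ(σ) on the poset Δ(Q) of nonempty finite ≼-chains ordered by inclusion is an order-preserving bijection whose fourth iterate is the identity. Consequently n ↦ ρⁿ defines an action of ℤ/4ℤ on Δ(Q). -/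
/-- The map `ρ(R,T) = (-T,R)`. -/
def rho {E : Type*} (p : Tope E × Tope E) : Tope E × Tope E := (-p.2, p.1)

/-- `Δ(Q)`: the poset of nonempty finite `≼`-chains of pairs of topes,
ordered by inclusion. -/
abbrev ChainQ (E : Type*) : Type _ :=
  { s : Finset (Tope E × Tope E) // s.Nonempty ∧ IsChain QLE (s : Set (Tope E × Tope E)) }


set_option linter.unusedSectionVars false
section Aux
variable {E : Type*} [Fintype E] [DecidableEq E]

lemma Tope.negneg (X : Tope E) : -(-X) = X := by
  apply Subtype.ext
  funext e
  show -(-(X.1 e)) = X.1 e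
  exact neg_neg _

lemma rho_four (p : Tope E × Tope E) : rho (rho (rho (rho p))) = p := by
  cases p with
  | mk T R => simp [rho, Tope.negneg]

lemma signAux : ∀ a b c d : SignType, a ≠ 0 → b ≠ 0 → c ≠ 0 → d ≠ 0 →
    (a = -b ∧ a ≠ 0 → a = -c ∧ a ≠ 0) → (a = -c ∧ a ≠ 0 → a = -d ∧ a ≠ 0) →
    ((-c = -(-d) ∧ -c ≠ 0 → -c = -a ∧ -c ≠ 0) ∧
     (-c = -a ∧ -c ≠ 0 → -c = -b ∧ -c ≠ 0)) := by decide

lemma qle_rho {p q : Tope E × Tope E} (h : QLE p q) : QLE (rho q) (rho p) := by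
  obtain ⟨h1, h2⟩ := h
  have key : ∀ e, ((-(p.2.1 e) = -(-(q.2.1 e)) ∧ -(p.2.1 e) ≠ 0 →
      -(p.2.1 e) = -(q.1.1 e) ∧ -(p.2.1 e) ≠ 0) ∧
      (-(p.2.1 e) = -(q.1.1 e) ∧ -(p.2.1 e) ≠ 0 →
      -(p.2.1 e) = -(p.1.1 e) ∧ -(p.2.1 e) ≠ 0)) := fun e =>
    signAux (q.1.1 e) (p.1.1 e) (p.2.1 e) (q.2.1 e)
      (q.1.2 e) (p.1.2 e) (p.2.2 e) (q.2.2 e) (fun hh => h1 hh) (fun hh => h2 hh)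
  exact ⟨fun e he => (key e).1 he, fun e he => (key e).2 he⟩

lemma chain_image {s : Finset (Tope E × Tope E)}
    (hc : IsChain QLE (s : Set (Tope E × Tope E))) :
    IsChain QLE ((s.image rho : Finset (Tope E × Tope E)) : Set (Tope E × Tope E)) := by
  intro x hx y hy hxy
  simp only [Finset.coe_image, Set.mem_image, Finset.mem_coe] at hx hy
  obtain ⟨p, hp, rfl⟩ := hx
  obtain ⟨q, hq, rfl⟩ := hy
  rcases hc hp hq (fun h => hxy (by rw [h])) with h | h
  · exact Or.inr (qle_rho h)
  · exact Or.inl (qle_rho h)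

def Fmap (σ : ChainQ E) : ChainQ E :=
  ⟨σ.1.image rho, σ.2.1.image rho, chain_image σ.2.2⟩

lemma Fmap_iterate_four : (Fmap (E := E))^[4] = id := by
  funext σ
  apply Subtype.ext
  have : (Fmap (E := E))^[4] σ = Fmap (Fmap (Fmap (Fmap σ))) := by
    simp [Function.iterate_succ, Function.comp]
  rw [this]
  show (((σ.1.image rho).image rho).image rho).image rho = σ.1
  rw [Finset.image_image, Finset.image_image, Finset.image_image]
  have : ((((rho ∘ rho) ∘ rho) ∘ rho) : Tope E × Tope E → Tope E × Tope E) = id := by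
    funext p; exact rho_four p
  rw [this, Finset.image_id]

end Aux

/-- `ρ` maps nonempty `≼`-chains to nonempty `≼`-chains, the induced map on
`Δ(Q)` is an inclusion-preserving bijection whose fourth iterate is the
identity, and consequently `n ↦ ρⁿ` gives an action of `ℤ/4ℤ` on `Δ(Q)`. -/
theorem rho_action_on_chains (E : Type*) [Fintype E] [DecidableEq E] :
    (∀ s : Finset (Tope E × Tope E), s.Nonempty → IsChain QLE (s : Set (Tope E × Tope E)) →
      (s.image rho).Nonempty ∧ IsChain QLE ((s.image rho : Finset (Tope E × Tope E)) :
        Set (Tope E × Tope E))) ∧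
    (∃ F : ChainQ E → ChainQ E,
      (∀ σ : ChainQ E, (F σ).1 = σ.1.image rho) ∧
      Function.Bijective F ∧
      (∀ σ τ : ChainQ E, σ.1 ⊆ τ.1 → (F σ).1 ⊆ (F τ).1) ∧
      F^[4] = id) ∧
    (∃ φ : Multiplicative (ZMod 4) →* Equiv.Perm (ChainQ E),
      ∀ σ : ChainQ E, ((φ (Multiplicative.ofAdd 1)) σ).1 = σ.1.image rho) := by
  refine ⟨fun s hs hc => ⟨hs.image rho, chain_image hc⟩, ?_, ?_⟩
  · refine ⟨Fmap, fun σ => rfl, ?_, ?_, Fmap_iterate_four⟩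
    · have hl : Function.LeftInverse (Fmap (E := E))^[3] Fmap := fun σ => by
        have := congrFun (Fmap_iterate_four (E := E)) σ
        simpa [Function.iterate_succ', Function.comp] using this
      have hr : Function.RightInverse (Fmap (E := E))^[3] Fmap := fun σ => by
        have := congrFun (Fmap_iterate_four (E := E)) σ
        simpa [Function.iterate_succ, Function.comp] using this
      exact ⟨hl.injective, hr.surjective⟩
    · intro σ τ h
      exact Finset.image_subset_image h
  · have hl : Function.LeftInverse (Fmap (E := E))^[3] Fmap := fun σ => by
      have := congrFun (Fmap_iterate_four (E := E)) σ
      simpa [Function.iterate_succ', Function.comp] using this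
    have hr : Function.RightInverse (Fmap (E := E))^[3] Fmap := fun σ => by
      have := congrFun (Fmap_iterate_four (E := E)) σ
      simpa [Function.iterate_succ, Function.comp] using this
    let e : Equiv.Perm (ChainQ E) := ⟨Fmap, (Fmap (E := E))^[3], hl, hr⟩
    have hiter : (⇑e)^[4] = (Fmap (E := E))^[4] := rfl
    have hpow4 : e ^ (4 : ℕ) = 1 := Equiv.ext fun σ => by
      have h4 : (⇑e)^[4] σ = σ := by rw [hiter, Fmap_iterate_four]; rfl
      rw [Equiv.Perm.iterate_eq_pow] at h4
      exact h4
    have hpowz : e ^ (4 : ℤ) = 1 := by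
      have : ((4 : ℕ) : ℤ) = (4 : ℤ) := by norm_num
      rw [← this, zpow_natCast, hpow4]
    have hf : (zmultiplesHom (Additive (Equiv.Perm (ChainQ E))) (Additive.ofMul e)) (4 : ℤ) = 0 := by
      rw [zmultiplesHom_apply, ← ofMul_zpow, hpowz]
      rfl
    refine ⟨AddMonoidHom.toMultiplicativeLeft
      (ZMod.lift 4 ⟨zmultiplesHom _ (Additive.ofMul e), hf⟩), fun σ => ?_⟩
    have h1 : (ZMod.lift 4 ⟨zmultiplesHom (Additive (Equiv.Perm (ChainQ E)))
        (Additive.ofMul e), hf⟩) (1 : ZMod 4) = Additive.ofMul e := by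
      have hc : ((1 : ℤ) : ZMod 4) = 1 := by norm_num
      rw [← hc, ZMod.lift_coe]
      simp
    have h2 : (AddMonoidHom.toMultiplicativeLeft
        (ZMod.lift 4 ⟨zmultiplesHom _ (Additive.ofMul e), hf⟩)) (Multiplicative.ofAdd (1 : ZMod 4)) = e := by
      show Additive.toMul ((ZMod.lift 4 ⟨zmultiplesHom _ (Additive.ofMul e), hf⟩)
        (1 : ZMod 4)) = e
      rw [h1]
      rfl
    rw [h2]
    rfl
end
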